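/- arXiv:1107.1110 — 3 statements merged into one kernel-verified Lean document; each statement's English description precedes it below -/
import Mathlib

section
/- Let c ∈ 𝔽_q[t] \ {0} and let B = B_κ(Γ) be a Bohr set in G_N of width k (i.e. k = max_{ξ∈Γ} κ(ξ)) such that B ⊆ G_{N−deg c}. Then the dilate c·B = {cx : x ∈ B} is itself a Bohr set in G_N, of rank at most rk(B) + q^{deg c} and width k. -/
open Finset

/-- `G_N`: the polynomials over `F` of degree `< N`, as a finite set. -/
noncomputable def GN (F : Type) [Field F] [Fintype F] (N : ℕ) : Finset (Polynomial F) :=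
  letI := Classical.decEq (Polynomial F)
  Finset.image (fun a : Fin N → F => ∑ i : Fin N, Polynomial.C (a i) * Polynomial.X ^ (i : ℕ))
    Finset.univ

/-- For a polynomial `x = ∑ x_j t^j` and `ξ = ∑_{n ≥ 0} (ξ n) t^{-(n+1)} ∈ 𝕋`, the coefficient of
`t^{-m}` (for `m ≥ 1`) in the product `x·ξ`, an element of `F((1/t))`. -/
def mulCoeff {F : Type} [Semiring F] (x : Polynomial F) (ξ : ℕ → F) (m : ℕ) : F :=
  ∑ j ∈ Finset.range (x.natDegree + 1), x.coeff j * ξ (m - 1 + j)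

/-- The Bohr set `B_w(Γ) = {x ∈ G_N : deg {x ξ} < -w ξ for all ξ ∈ Γ}`, where elements of
`𝕋 = {∑_{i<0} a_i t^i}` are represented by functions `ℕ → F` (the `n`-th value being the
coefficient of `t^{-(n+1)}`).  The rank of this Bohr set is `Γ.card` and its width is the
maximum of `w` over `Γ`. -/
noncomputable def bohr (F : Type) [Field F] [Fintype F] (N : ℕ) (Γ : Finset (ℕ → F))
    (w : (ℕ → F) → ℕ) : Finset (Polynomial F) :=
  letI := Classical.decPred fun x : Polynomial F =>
    ∀ ξ ∈ Γ, ∀ m ∈ Finset.Icc 1 (w ξ), mulCoeff x ξ m = 0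
  (GN F N).filter fun x => ∀ ξ ∈ Γ, ∀ m ∈ Finset.Icc 1 (w ξ), mulCoeff x ξ m = 0

/-- The density `|A|/|B|` of `A` in `B`. -/
noncomputable def dens {G : Type} (B A : Finset G) : ℝ := (A.card : ℝ) / B.card

/-- The density `|(A + x) ∩ B'| / |B'|` of the translate `A + x` in `B'`. -/
noncomputable def densShift {G : Type} [AddGroup G] (B' A : Finset G) (x : G) : ℝ :=
  letI := Classical.decEq G
  (((A.image (· + x)) ∩ B').card : ℝ) / B'.card

/-- Indicator function of a finite set, real valued. -/
noncomputable def ind {G : Type} (A : Finset G) : G → ℝ := fun x =>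
  letI := Classical.decEq G
  if x ∈ A then 1 else 0

/-- Convolution with respect to the uniform measure on `B`:
`(f ∗ g)(x) = 𝔼_{y ∈ B} f(y) g(x - y)`. -/
noncomputable def convWith {G : Type} [AddCommGroup G] (B : Finset G) (f g : G → ℝ) : G → ℝ :=
  fun x => (∑ y ∈ B, f y * g (x - y)) / B.card

/-- Iterated convolution `f ∗ S₁ ∗ ⋯ ∗ S_k` (with respect to the uniform measure on `B`),
the sets `Sᵢ` being identified with their indicator functions. -/
noncomputable def iconv {G : Type} [AddCommGroup G] (B : Finset G) :
    (G → ℝ) → List (Finset G) → (G → ℝ)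
  | f, [] => f
  | f, S :: rest => iconv B (convWith B f (ind S)) rest

/-- The inner product `⟨f, g⟩_β = 𝔼_{x ∈ B} f(x) g(x)` (for real-valued functions). -/
noncomputable def innerB {G : Type} (B : Finset G) (f g : G → ℝ) : ℝ :=
  (∑ x ∈ B, f x * g x) / B.card

/-- The dilate `c · B = {c x : x ∈ B}` of a finite set of polynomials. -/
noncomputable def dilate {F : Type} [Field F] (c : Polynomial F) (B : Finset (Polynomial F)) :
    Finset (Polynomial F) :=
  letI := Classical.decEq (Polynomial F)
  B.image (fun x => c * x)


/-! ### Auxiliary material for `statement_3` -/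

namespace Statement3Aux

open Finset Polynomial HahnSeries

variable {F : Type} [Field F]

/-- Embedding of polynomials in `t` into Laurent series in `u = 1/t`. -/
noncomputable def emb : Polynomial F →+* LaurentSeries F :=
  Polynomial.eval₂RingHom (HahnSeries.C : F →+* LaurentSeries F)
    (HahnSeries.single (-1 : ℤ) (1 : F))

lemma emb_eq_sum (p : Polynomial F) :
    emb p = ∑ j ∈ Finset.range (p.natDegree + 1),
      HahnSeries.single (-(j : ℤ)) (p.coeff j) := by
  rw [emb, Polynomial.coe_eval₂RingHom, Polynomial.eval₂_eq_sum_range]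
  refine Finset.sum_congr rfl fun j _ => ?_
  rw [HahnSeries.single_pow]
  have hj : (j • (-1 : ℤ)) = -(j : ℤ) := by simp
  rw [hj, one_pow, HahnSeries.C_apply, HahnSeries.single_mul_single, zero_add, mul_one]

lemma sum_coeff {α : Type} (s : Finset α) (f : α → LaurentSeries F) (z : ℤ) :
    (∑ a ∈ s, f a).coeff z = ∑ a ∈ s, (f a).coeff z :=
  map_sum (HahnSeries.coeff.addMonoidHom z) f s

lemma emb_mul_coeff (p : Polynomial F) (f : LaurentSeries F) (z : ℤ) :
    (emb p * f).coeff z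
      = ∑ j ∈ Finset.range (p.natDegree + 1), p.coeff j * f.coeff (z + j) := by
  rw [emb_eq_sum, Finset.sum_mul, sum_coeff]
  refine Finset.sum_congr rfl fun j _ => ?_
  have h := HahnSeries.coeff_single_mul_add (r := p.coeff j) (x := f) (a := z + j) (b := -(j : ℤ))
  simpa using h

lemma emb_coeff (p : Polynomial F) (z : ℤ) :
    (emb p).coeff z = if z ≤ 0 then p.coeff (-z).toNat else 0 := by
  rw [emb_eq_sum, sum_coeff]
  by_cases hz : z ≤ 0
  · rw [if_pos hz]
    rw [Finset.sum_congr rfl (fun j _ => ?_),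
      Finset.sum_ite_eq' (Finset.range (p.natDegree + 1)) ((-z).toNat) (fun j => p.coeff j)]
    · by_cases h : (-z).toNat ∈ Finset.range (p.natDegree + 1)
      · rw [if_pos h]
      · rw [if_neg h]
        symm
        apply Polynomial.coeff_eq_zero_of_natDegree_lt
        simp only [Finset.mem_range] at h
        omega
    · rw [HahnSeries.coeff_single]
      by_cases h : j = (-z).toNat
      · rw [if_pos (by omega), if_pos h]
      · rw [if_neg (by omega), if_neg h]
  · rw [if_neg hz]
    refine Finset.sum_eq_zero fun j _ => ?_
    rw [HahnSeries.coeff_single, if_neg (by omega)]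

/-- The element of `𝕋` with coefficients `ξ`, as a Laurent series in `u = 1/t`. -/
noncomputable def Tfun (ξ : ℕ → F) : LaurentSeries F :=
  ((PowerSeries.mk fun n => if n = 0 then 0 else ξ (n - 1) : PowerSeries F) : LaurentSeries F)

/-- Extract the `𝕋`-coefficients from a Laurent series in `u = 1/t`. -/
noncomputable def toT (f : LaurentSeries F) : ℕ → F := fun n => f.coeff ((n : ℤ) + 1)

lemma Tfun_coeff_nat (ξ : ℕ → F) (n : ℕ) : (Tfun ξ).coeff ((n : ℤ) + 1) = ξ n := by
  have : ((n : ℤ) + 1) = ((n + 1 : ℕ) : ℤ) := by push_cast; ring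
  rw [Tfun, this, LaurentSeries.coeff_coe_powerSeries, PowerSeries.coeff_mk]
  simp

lemma Tfun_coeff_nonpos (ξ : ℕ → F) (z : ℤ) (hz : z ≤ 0) : (Tfun ξ).coeff z = 0 := by
  rw [Tfun, PowerSeries.coeff_coe]
  rcases lt_or_eq_of_le hz with h | h
  · rw [if_pos h]
  · subst h
    rw [if_neg (by omega)]
    simp [PowerSeries.coeff_mk]

lemma Tfun_toT (f : LaurentSeries F) (hf : ∀ z ≤ 0, f.coeff z = 0) : Tfun (toT f) = f := by
  ext z
  rcases le_or_gt z 0 with hz | hz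
  · rw [Tfun_coeff_nonpos _ _ hz, hf z hz]
  · have : z = ((z - 1).toNat : ℤ) + 1 := by omega
    rw [this, Tfun_coeff_nat]
    rfl

lemma emb_ne_zero {p : Polynomial F} (hp : p ≠ 0) : emb p ≠ 0 := by
  intro h
  have := emb_coeff p (-(p.natDegree : ℤ))
  rw [h] at this
  simp only [HahnSeries.coeff_zero, if_pos (by omega : -(p.natDegree : ℤ) ≤ 0)] at this
  rw [neg_neg, Int.toNat_natCast] at this
  exact Polynomial.leadingCoeff_ne_zero.mpr hp this.symm

lemma order_emb {p : Polynomial F} (hp : p ≠ 0) : (emb p).order = -(p.natDegree : ℤ) := by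
  apply le_antisymm
  · apply HahnSeries.order_le_of_coeff_ne_zero
    rw [emb_coeff, if_pos (by omega : -(p.natDegree : ℤ) ≤ 0), neg_neg, Int.toNat_natCast]
    exact Polynomial.leadingCoeff_ne_zero.mpr hp
  · have h := HahnSeries.coeff_order_eq_zero.not.mpr (emb_ne_zero hp)
    rw [emb_coeff] at h
    by_cases h0 : (emb p : LaurentSeries F).order ≤ 0
    · rw [if_pos h0] at h
      have := Polynomial.le_natDegree_of_ne_zero h
      omega
    · rw [if_neg h0] at h
      exact absurd rfl h

lemma quot_coeff_nonpos {c : Polynomial F} (hc : c ≠ 0) (f : LaurentSeries F)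
    (hf : ∀ z ≤ 0, f.coeff z = 0) : ∀ z ≤ 0, (f / emb c).coeff z = 0 := by
  intro z hz
  by_cases hf0 : f = 0
  · simp [hf0]
  have hg0 : f / emb c ≠ 0 := div_ne_zero hf0 (emb_ne_zero hc)
  have hfe : f = (f / emb c) * emb c := (div_mul_cancel₀ f (emb_ne_zero hc)).symm
  have horder : f.order = (f / emb c).order + (emb c).order := by
    conv_lhs => rw [hfe]
    exact HahnSeries.order_mul hg0 (emb_ne_zero hc)
  have hford : 1 ≤ f.order := by
    by_contra hlt
    exact HahnSeries.coeff_order_eq_zero.not.mpr hf0 (hf _ (by omega))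
  apply HahnSeries.coeff_eq_zero_of_lt_order
  rw [order_emb hc] at horder
  omega

lemma quot_emb_coeff_nonpos {c : Polynomial F} (hc : c ≠ 0) {a : Polynomial F}
    (hd : a.natDegree < c.natDegree) : ∀ z ≤ 0, (emb a / emb c).coeff z = 0 := by
  intro z hz
  by_cases ha : a = 0
  · simp [ha]
  have hg0 : emb a / emb c ≠ 0 := div_ne_zero (emb_ne_zero ha) (emb_ne_zero hc)
  have hfe : emb a = (emb a / emb c) * emb c := (div_mul_cancel₀ _ (emb_ne_zero hc)).symm
  have horder : (emb a).order = (emb a / emb c).order + (emb c).order := by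
    conv_lhs => rw [hfe]
    exact HahnSeries.order_mul hg0 (emb_ne_zero hc)
  apply HahnSeries.coeff_eq_zero_of_lt_order
  rw [order_emb hc, order_emb ha] at horder
  omega

end Statement3Aux

namespace Statement3Aux

open Finset Polynomial HahnSeries

variable {F : Type} [Field F]

lemma mulCoeff_eq (x : Polynomial F) (ξ : ℕ → F) (m : ℕ) (hm : 1 ≤ m) :
    mulCoeff x ξ m = (emb x * Tfun ξ).coeff (m : ℤ) := by
  rw [emb_mul_coeff, mulCoeff]
  refine Finset.sum_congr rfl fun j _ => ?_
  congr 1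
  have h : ((m : ℤ) + j) = ((m - 1 + j : ℕ) : ℤ) + 1 := by omega
  rw [h, Tfun_coeff_nat]

lemma key1 {c : Polynomial F} (hc : c ≠ 0) (x : Polynomial F) (ξ : ℕ → F) (m : ℕ)
    (hm : 1 ≤ m) :
    mulCoeff (c * x) (toT (Tfun ξ / emb c)) m = mulCoeff x ξ m := by
  have hq := quot_coeff_nonpos hc (Tfun ξ) (fun z hz => Tfun_coeff_nonpos ξ z hz)
  rw [mulCoeff_eq _ _ m hm, mulCoeff_eq _ _ m hm, Tfun_toT _ hq, map_mul]
  congr 1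
  rw [mul_comm (emb c) (emb x), mul_assoc]
  congr 1
  rw [mul_comm, div_mul_cancel₀ _ (emb_ne_zero hc)]

lemma key2 {c : Polynomial F} (hc : c ≠ 0) (x a : Polynomial F)
    (hd : a.natDegree < c.natDegree) :
    mulCoeff (c * x) (toT (emb a / emb c)) 1 = 0 := by
  rw [mulCoeff_eq _ _ 1 le_rfl, Tfun_toT _ (quot_emb_coeff_nonpos hc hd), map_mul]
  have h : emb c * emb x * (emb a / emb c) = emb (x * a) := by
    rw [map_mul, mul_comm (emb c) (emb x), mul_assoc, mul_comm (emb c), div_mul_cancel₀ _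
      (emb_ne_zero hc)]
  rw [h, emb_coeff, if_neg (by omega)]

lemma key3 {c : Polynomial F} (hc : c ≠ 0) (y : Polynomial F)
    (h : ∀ a : Polynomial F, a ≠ 0 → a.natDegree < c.natDegree →
      mulCoeff y (toT (emb a / emb c)) 1 = 0) : c ∣ y := by
  rw [← EuclideanDomain.mod_eq_zero]
  by_contra hr0
  set r := y % c with hrdef
  have hdeg : r.degree < c.degree := EuclideanDomain.mod_lt y hc
  have hnd : r.natDegree < c.natDegree := Polynomial.natDegree_lt_natDegree hr0 hdeg
  set g := emb r / emb c with hg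
  have hg0 : g ≠ 0 := div_ne_zero (emb_ne_zero hr0) (emb_ne_zero hc)
  have horder : g.order = (c.natDegree : ℤ) - r.natDegree := by
    have hfe : emb r = g * emb c := (div_mul_cancel₀ _ (emb_ne_zero hc)).symm
    have h2 : (emb r).order = g.order + (emb c).order := by
      conv_lhs => rw [hfe]
      exact HahnSeries.order_mul hg0 (emb_ne_zero hc)
    rw [order_emb hc, order_emb hr0] at h2
    omega
  set e := c.natDegree - r.natDegree with he
  have he1 : 1 ≤ e := by omega
  set a : Polynomial F := Polynomial.X ^ (e - 1) with ha
  have ha0 : a ≠ 0 := pow_ne_zero _ Polynomial.X_ne_zero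
  have hand : a.natDegree = e - 1 := by rw [ha, Polynomial.natDegree_X_pow]
  have hadeg : a.natDegree < c.natDegree := by omega
  have hcond := h a ha0 hadeg
  rw [mulCoeff_eq _ _ 1 le_rfl, Tfun_toT _ (quot_emb_coeff_nonpos hc hadeg),
    Nat.cast_one] at hcond
  -- decompose y = c * (y / c) + r
  have hy : y = c * (y / c) + r := (EuclideanDomain.div_add_mod y c).symm
  have hsplit : emb y * (emb a / emb c) = emb (y / c * a) + emb a * g := by
    conv_lhs => rw [hy]
    rw [map_add, map_mul, add_mul, map_mul]
    congr 1
    · rw [mul_comm (emb c) (emb (y/c)), mul_assoc, mul_comm (emb c), div_mul_cancel₀ _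
        (emb_ne_zero hc)]
    · rw [hg]
      ring
  rw [hsplit] at hcond
  have h1 : (emb (y / c * a)).coeff (1 : ℤ) = 0 := by
    rw [emb_coeff, if_neg (by omega)]
  have h2 : (emb a * g).coeff (1 : ℤ) = g.coeff (e : ℤ) := by
    have hXa : emb a = HahnSeries.single (-((e - 1 : ℕ) : ℤ)) (1 : F) := by
      rw [ha, map_pow]
      have hX : emb (Polynomial.X : Polynomial F) = HahnSeries.single (-1 : ℤ) (1 : F) := by
        rw [emb]
        simp
      rw [hX, HahnSeries.single_pow, one_pow]
      congr 1
      simp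
    rw [hXa]
    have := HahnSeries.coeff_single_mul_add (r := (1 : F)) (x := g) (a := (e : ℤ))
      (b := -((e - 1 : ℕ) : ℤ))
    have harith : (e : ℤ) + -((e - 1 : ℕ) : ℤ) = 1 := by omega
    rw [harith] at this
    rw [this, one_mul]
  rw [HahnSeries.coeff_add, h1, h2, zero_add] at hcond
  have : g.coeff g.order ≠ 0 := HahnSeries.coeff_order_eq_zero.not.mpr hg0
  rw [horder] at this
  have : g.coeff (e : ℤ) ≠ 0 := by
    have harith : ((e : ℤ)) = (c.natDegree : ℤ) - r.natDegree := by omega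
    rwa [harith]
  exact this hcond

lemma mem_GN_iff [Fintype F] {N : ℕ} {p : Polynomial F} :
    p ∈ GN F N ↔ p.degree < (N : ℕ) := by
  classical
  constructor
  · intro hp
    simp only [GN, Finset.mem_image, Finset.mem_univ, true_and] at hp
    obtain ⟨a, rfl⟩ := hp
    refine lt_of_le_of_lt (Polynomial.degree_sum_le _ _) ?_
    rw [Finset.sup_lt_iff (by exact WithBot.bot_lt_coe N)]
    intro i _
    refine lt_of_le_of_lt (Polynomial.degree_C_mul_X_pow_le _ _) ?_
    exact_mod_cast WithBot.coe_lt_coe.mpr i.isLt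
  · intro hp
    simp only [GN, Finset.mem_image, Finset.mem_univ, true_and]
    by_cases hp0 : p = 0
    · refine ⟨0, ?_⟩
      simp [hp0]
    · refine ⟨fun i => p.coeff i, ?_⟩
      have hnd : p.natDegree < N := (Polynomial.natDegree_lt_iff_degree_lt hp0).mpr hp
      rw [Fin.sum_univ_eq_sum_range (fun i => Polynomial.C (p.coeff i) * Polynomial.X ^ i) N]
      conv_rhs => rw [Polynomial.as_sum_range' p N hnd]
      refine Finset.sum_congr rfl fun i _ => ?_
      rw [Polynomial.C_mul_X_pow_eq_monomial]

lemma GN_card_le [Fintype F] (d : ℕ) : (GN F d).card ≤ Fintype.card F ^ d := by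
  classical
  have h1 : (GN F d).card ≤ (Finset.univ : Finset (Fin d → F)).card := by
    rw [GN]
    exact @Finset.card_image_le _ _ _ _ (Classical.decEq _)
  refine le_trans h1 ?_
  rw [Finset.card_univ]
  simp [Fintype.card_fun]

end Statement3Aux

namespace Statement3Aux

open Finset Polynomial

lemma mem_bohr_iff {F : Type} [Field F] [Fintype F] {N : ℕ} {Γ : Finset (ℕ → F)}
    {w : (ℕ → F) → ℕ} {x : Polynomial F} :
    x ∈ bohr F N Γ w ↔ x ∈ GN F N ∧ ∀ ξ ∈ Γ, ∀ m ∈ Finset.Icc 1 (w ξ), mulCoeff x ξ m = 0 := by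
  rw [bohr]
  exact @Finset.mem_filter _ _ (Classical.decPred _) _ _

lemma mem_dilate_iff {F : Type} [Field F] {c : Polynomial F} {B : Finset (Polynomial F)}
    {y : Polynomial F} : y ∈ dilate c B ↔ ∃ x ∈ B, c * x = y := by
  rw [dilate]
  exact @Finset.mem_image _ _ (Classical.decEq _) _ _ _

end Statement3Aux


open Statement3Aux

/-- Lemma 2.1 of the paper.  If `c ∈ 𝔽_q[t] ∖ {0}` and `B = B_w(Γ)` is a Bohr
set in `G_N` of width `k ≥ 1` (i.e. `w ξ ≤ k` on `Γ`) with `B ⊆ G_{N - deg c}`, then `c · B` is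
again a Bohr set in `G_N`, of rank at most `rk B + q^{deg c}` and width (at most) `k`. -/
theorem statement_3 (F : Type) [Field F] [Fintype F] (N : ℕ) (c : Polynomial F) (hc : c ≠ 0)
    (Γ : Finset (ℕ → F)) (w : (ℕ → F) → ℕ) (k : ℕ) (hk : 1 ≤ k) (hw : ∀ ξ ∈ Γ, w ξ ≤ k)
    (hsub : bohr F N Γ w ⊆ GN F (N - c.natDegree)) :
    ∃ (Γ' : Finset (ℕ → F)) (w' : (ℕ → F) → ℕ),
      dilate c (bohr F N Γ w) = bohr F N Γ' w' ∧
      Γ'.card ≤ Γ.card + Fintype.card F ^ c.natDegree ∧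
      ∀ ξ ∈ Γ', w' ξ ≤ k := by
  classical
  set d := c.natDegree with hd
  set dv : (ℕ → F) → (ℕ → F) := fun ξ => toT (Tfun ξ / emb c) with hdv
  set eta : Polynomial F → (ℕ → F) := fun a => toT (emb a / emb c) with heta
  set Γ1 := Γ.image dv with hΓ1
  set A := (GN F d).erase 0 with hA
  set Γ2 := A.image eta with hΓ2
  set w' : (ℕ → F) → ℕ := fun η =>
    max (Γ.sup fun ξ => if dv ξ = η then w ξ else 0) (if η ∈ Γ2 then 1 else 0) with hw'
  refine ⟨Γ1 ∪ Γ2, w', ?_, ?_, ?_⟩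
  · -- set equality
    ext y
    constructor
    · -- forward inclusion
      intro hy
      obtain ⟨x, hxB, rfl⟩ := mem_dilate_iff.mp hy
      obtain ⟨hxG, hxcond⟩ := mem_bohr_iff.mp hxB
      rw [mem_bohr_iff]
      constructor
      · rw [mem_GN_iff]
        by_cases hx0 : x = 0
        · rw [hx0, mul_zero, Polynomial.degree_zero]
          exact WithBot.bot_lt_coe N
        · have hxG' := hsub hxB
          rw [mem_GN_iff] at hxG'
          have hxd : x.natDegree < N - d := (Polynomial.natDegree_lt_iff_degree_lt hx0).mpr hxG'
          have hcx0 : c * x ≠ 0 := mul_ne_zero hc hx0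
          rw [← Polynomial.natDegree_lt_iff_degree_lt hcx0, Polynomial.natDegree_mul hc hx0]
          omega
      · intro η hη m hm
        rw [Finset.mem_Icc] at hm
        obtain ⟨hm1, hm2⟩ := hm
        simp only [hw'] at hm2
        rcases le_max_iff.mp hm2 with hcase | hcase
        · obtain ⟨ξ, hξΓ, hξle⟩ :=
            (Finset.le_sup_iff (show (⊥ : ℕ) < m by simp; omega)).mp hcase
          by_cases hdveq : dv ξ = η
          · rw [← hdveq]
            rw [if_pos hdveq] at hξle
            have h := hxcond ξ hξΓ m (Finset.mem_Icc.mpr ⟨hm1, hξle⟩)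
            rw [← key1 hc x ξ m hm1] at h
            exact h
          · rw [if_neg hdveq] at hξle
            omega
        · by_cases hη2 : η ∈ Γ2
          · obtain ⟨a, haA, rfl⟩ := Finset.mem_image.mp hη2
            obtain ⟨ha0, haG⟩ := Finset.mem_erase.mp haA
            rw [mem_GN_iff] at haG
            have had : a.natDegree < d := (Polynomial.natDegree_lt_iff_degree_lt ha0).mpr haG
            have hm1' : m = 1 := by
              rw [if_pos hη2] at hcase
              omega
            rw [hm1']
            exact key2 hc x a had
          · rw [if_neg hη2] at hcase
            omega
    · -- backward inclusion
      intro hy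
      obtain ⟨hyG, hycond⟩ := mem_bohr_iff.mp hy
      have hdvd : c ∣ y := by
        apply key3 hc
        intro a ha0 had
        have haG : a ∈ GN F d :=
          mem_GN_iff.mpr ((Polynomial.natDegree_lt_iff_degree_lt ha0).mp had)
        have haA : a ∈ A := Finset.mem_erase.mpr ⟨ha0, haG⟩
        have hη2 : eta a ∈ Γ2 := Finset.mem_image_of_mem _ haA
        have hw1 : 1 ≤ w' (eta a) := by
          simp only [hw']
          exact le_max_of_le_right (by rw [if_pos hη2])
        exact hycond (eta a) (Finset.mem_union_right _ hη2) 1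
          (Finset.mem_Icc.mpr ⟨le_rfl, hw1⟩)
      obtain ⟨x, rfl⟩ := hdvd
      rw [mem_dilate_iff]
      refine ⟨x, ?_, rfl⟩
      rw [mem_bohr_iff]
      constructor
      · rw [mem_GN_iff]
        by_cases hx0 : x = 0
        · rw [hx0, Polynomial.degree_zero]
          exact WithBot.bot_lt_coe N
        · rw [mem_GN_iff] at hyG
          have hcx0 : c * x ≠ 0 := mul_ne_zero hc hx0
          rw [← Polynomial.natDegree_lt_iff_degree_lt hcx0,
            Polynomial.natDegree_mul hc hx0] at hyG
          rw [← Polynomial.natDegree_lt_iff_degree_lt hx0]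
          omega
      · intro ξ hξ m hm
        rw [Finset.mem_Icc] at hm
        have hsup : w ξ ≤ Γ.sup fun ξ' => if dv ξ' = dv ξ then w ξ' else 0 := by
          refine le_trans ?_ (Finset.le_sup hξ)
          rw [if_pos rfl]
        have hmw' : m ≤ w' (dv ξ) := by
          simp only [hw']
          exact le_trans hm.2 (le_trans hsup (le_max_left _ _))
        have h := hycond (dv ξ) (Finset.mem_union_left _ (Finset.mem_image_of_mem _ hξ)) m
          (Finset.mem_Icc.mpr ⟨hm.1, hmw'⟩)
        rw [← key1 hc x ξ m hm.1]
        exact h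
  · -- cardinality
    refine le_trans (Finset.card_union_le _ _) ?_
    have h1 : Γ1.card ≤ Γ.card := Finset.card_image_le
    have h2 : Γ2.card ≤ Fintype.card F ^ d :=
      le_trans Finset.card_image_le (le_trans Finset.card_erase_le (GN_card_le d))
    omega
  · -- width
    intro η hη
    simp only [hw']
    apply max_le
    · exact Finset.sup_le fun ξ hξ => by split <;> [exact hw ξ hξ; omega]
    · split <;> omega
end

section
/- (Chang's lemma.) Let G be any finite additive group and D ⊆ G a subset with density δ = |D|/|G| > 0. If η > 0, then there is a subset Δ̃ ⊆ Δ_η(D) such that |Δ̃| ≤ C η^{−2} log(1/δ) for an absolute constant C, and Δ_η(D) ⊆ {∑_{λ∈Δ̃} ε_λ λ : ε_λ ∈ {−1,0,1}}, i.e. every element of Δ_η(D) is a {−1,0,1}-combination of elements of Δ̃. -/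
open Finset

/-- The Fourier transform of the indicator of `D ⊆ G` at a character `γ ∈ Ĝ`:
`D̂(γ) = 𝔼_{x ∈ G} 1_D(x) γ(x)`. -/
noncomputable def fourierInd {G : Type} [AddCommGroup G] [Fintype G] (D : Finset G)
    (γ : AddChar G Circle) : ℂ :=
  letI := Classical.decEq G
  (∑ x : G, if x ∈ D then (γ x : ℂ) else 0) / (Fintype.card G : ℂ)

/-- The `η`-spectrum `Δ_η(D) = {γ ∈ Ĝ : |D̂(γ)| ≥ η ‖1_D‖₁}`, where `‖1_D‖₁ = |D|/|G|`. -/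
def specSet {G : Type} [AddCommGroup G] [Fintype G] (η : ℝ) (D : Finset G) :
    Set (AddChar G Circle) :=
  {γ | η * ((D.card : ℝ) / Fintype.card G) ≤ ‖fourierInd D γ‖}

section ChangAux

variable {G : Type} [AddCommGroup G] [Fintype G]

/-- complex-valued character sum -/
lemma char_sum_eq (χ : AddChar G Circle) :
    ∑ x : G, (χ x : ℂ) = if χ = 1 then (Fintype.card G : ℂ) else 0 := by
  classical
  have h := AddChar.sum_eq_ite (Circle.coeHom.compAddChar χ)
  have hinj : Function.Injective (Circle.coeHom.compAddChar (A := G)) :=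
    MonoidHom.compAddChar_injective_right _ Circle.coe_injective
  have h01 : (Circle.coeHom.compAddChar χ = 0) ↔ χ = 1 := by
    rw [show (0 : AddChar G ℂ) = Circle.coeHom.compAddChar (1 : AddChar G Circle) by
      ext x; simp [MonoidHom.compAddChar_apply]]
    exact hinj.eq_iff
  simp only [MonoidHom.compAddChar_apply, h01] at h
  exact h

lemma exp_mul_le_cosh_add {u : ℝ} (t : ℝ) (hu : |u| ≤ 1) :
    Real.exp (t * u) ≤ Real.cosh t + u * Real.sinh t := by
  obtain ⟨h1, h2⟩ := abs_le.1 hu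
  have key := convexOn_exp.2 (Set.mem_univ t) (Set.mem_univ (-t))
    (by linarith : (0:ℝ) ≤ (1+u)/2) (by linarith : (0:ℝ) ≤ (1-u)/2) (by ring)
  simp only [smul_eq_mul] at key
  have : (1+u)/2 * t + (1-u)/2 * (-t) = t * u := by ring
  rw [this] at key
  rw [Real.cosh_eq, Real.sinh_eq]
  nlinarith [key]

lemma factor_nonneg {u t : ℝ} (ht : 0 ≤ t) (hu : |u| ≤ 1) :
    0 ≤ Real.cosh t + u * Real.sinh t := by
  obtain ⟨h1, h2⟩ := abs_le.1 hu
  nlinarith [Real.cosh_sub_sinh t, Real.exp_pos (-t), Real.sinh_nonneg_iff.2 ht]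


def GoodEps {G : Type} [AddCommGroup G] (ε : AddChar G Circle → ℤ) : Prop :=
  ∀ lam, ε lam = -1 ∨ ε lam = 0 ∨ ε lam = 1

def RelDiss {G : Type} [AddCommGroup G] (χ : AddChar G Circle)
    (Λ : Finset (AddChar G Circle)) : Prop :=
  ∀ ε : AddChar G Circle → ℤ, GoodEps ε → χ * ∏ lam ∈ Λ, lam ^ ε lam = 1 →
    χ = 1 ∧ ∀ lam ∈ Λ, ε lam = 0

lemma relDiss_insert_elim {χ μ : AddChar G Circle} {Λ : Finset (AddChar G Circle)}
    (hμ : μ ∉ Λ) (h : RelDiss χ (insert μ Λ)) (e : ℤ) (he : e = -1 ∨ e = 0 ∨ e = 1) :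
    (e = 0 → RelDiss χ Λ) ∧ (e ≠ 0 → RelDiss (χ * μ ^ e) Λ ∧ χ * μ ^ e ≠ 1) := by
  classical
  have key : ∀ ε : AddChar G Circle → ℤ, GoodEps ε →
      (χ * μ ^ e) * ∏ lam ∈ Λ, lam ^ ε lam = 1 →
      χ = 1 ∧ e = 0 ∧ ∀ lam ∈ Λ, ε lam = 0 := by
    intro ε hε hprod
    set ε' : AddChar G Circle → ℤ := fun lam => if lam = μ then e else ε lam with hε'
    have hgood : GoodEps ε' := by
      intro lam; by_cases hl : lam = μ <;> simp [hε', hl, he, hε lam]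
    have hprod' : χ * ∏ lam ∈ insert μ Λ, lam ^ ε' lam = 1 := by
      rw [Finset.prod_insert hμ]
      have : ∏ lam ∈ Λ, lam ^ ε' lam = ∏ lam ∈ Λ, lam ^ ε lam :=
        Finset.prod_congr rfl fun lam hl => by
          have : lam ≠ μ := fun hc => hμ (hc ▸ hl)
          simp [hε', this]
      rw [this]
      simpa [hε', mul_assoc] using hprod
    obtain ⟨h1, h2⟩ := h ε' hgood hprod'
    have hμ0 : ε' μ = 0 := h2 μ (mem_insert_self _ _)
    have he0 : e = 0 := by simpa [hε'] using hμ0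
    exact ⟨h1, he0, fun lam hl => by
      have : lam ≠ μ := fun hc => hμ (hc ▸ hl)
      have h4 := h2 lam (mem_insert_of_mem hl); rw [hε'] at h4; simpa [this] using h4⟩
  constructor
  · intro he0 ε hε hprod
    obtain ⟨h1, _, h3⟩ := key ε hε (by simpa [he0] using hprod)
    exact ⟨h1, h3⟩
  · intro hne
    constructor
    · intro ε hε hprod
      obtain ⟨_, h2, _⟩ := key ε hε hprod
      exact absurd h2 hne
    · intro hc
      obtain ⟨_, h2, _⟩ := key (fun _ => 0) (fun _ => Or.inr (Or.inl rfl)) (by simpa using hc)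
      exact hne h2

lemma riesz_sum (char_sum_eq : ∀ χ : AddChar G Circle,
      ∑ x : G, (χ x : ℂ) = if χ = 1 then (Fintype.card G : ℂ) else 0)
    (a : ℂ) (f g : AddChar G Circle → ℂ) (Λ : Finset (AddChar G Circle)) :
    ∀ (χ : AddChar G Circle), RelDiss χ Λ →
    ∑ x : G, (χ x : ℂ) * ∏ lam ∈ Λ, (a + f lam * (lam x : ℂ) + g lam * ((lam x : ℂ))⁻¹)
      = if χ = 1 then (Fintype.card G : ℂ) * a ^ Λ.card else 0 := by
  classical
  induction Λ using Finset.induction_on with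
  | empty => intro χ _; simpa using char_sum_eq χ
  | @insert μ Λ hμ ih =>
    intro χ hrd
    have expand : ∀ x : G, (χ x : ℂ) *
        ∏ lam ∈ insert μ Λ, (a + f lam * (lam x : ℂ) + g lam * ((lam x : ℂ))⁻¹)
        = a * ((χ x : ℂ) * ∏ lam ∈ Λ, (a + f lam * (lam x : ℂ) + g lam * ((lam x : ℂ))⁻¹))
        + f μ * (((χ * μ) x : ℂ) * ∏ lam ∈ Λ, (a + f lam * (lam x : ℂ) + g lam * ((lam x : ℂ))⁻¹))
        + g μ * (((χ * μ⁻¹) x : ℂ) * ∏ lam ∈ Λ, (a + f lam * (lam x : ℂ) + g lam * ((lam x : ℂ))⁻¹)) := by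
      intro x
      rw [Finset.prod_insert hμ]
      have h1 : ((χ * μ) x : ℂ) = (χ x : ℂ) * (μ x : ℂ) := by push_cast [AddChar.mul_apply]; ring
      have h2 : ((χ * μ⁻¹) x : ℂ) = (χ x : ℂ) * ((μ x : ℂ))⁻¹ := by
        rw [AddChar.mul_apply, AddChar.inv_apply']; push_cast; ring
      rw [h1, h2]; ring
    rw [Finset.sum_congr rfl fun x _ => expand x]
    rw [Finset.sum_add_distrib, Finset.sum_add_distrib, ← Finset.mul_sum, ← Finset.mul_sum,
      ← Finset.mul_sum]
    have case0 := (relDiss_insert_elim hμ hrd 0 (Or.inr (Or.inl rfl))).1 rfl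
    have case1 := (relDiss_insert_elim hμ hrd 1 (Or.inr (Or.inr rfl))).2 one_ne_zero
    have casem := (relDiss_insert_elim hμ hrd (-1) (Or.inl rfl)).2 (by norm_num)
    rw [ih χ case0, ih (χ * μ) (by simpa using case1.1), ih (χ * μ⁻¹) (by simpa using casem.1)]
    have hne1 : χ * μ ≠ 1 := by simpa using case1.2
    have hnem : χ * μ⁻¹ ≠ 1 := by simpa using casem.2
    rw [if_neg hne1, if_neg hnem]
    by_cases hχ : χ = 1 <;> simp [hχ, Finset.card_insert_of_notMem hμ, pow_succ] <;> ring





lemma sum_over_D (D : Finset G) (lam : AddChar G Circle) :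
    ∑ x ∈ D, (lam x : ℂ) = (Fintype.card G : ℂ) * fourierInd D lam := by
  classical
  have hN : (Fintype.card G : ℂ) ≠ 0 := Nat.cast_ne_zero.2 Fintype.card_ne_zero
  unfold fourierInd
  rw [mul_div_cancel₀ _ hN]
  rw [Finset.sum_ite_mem, Finset.univ_inter]

lemma chang_card_bound (char_sum_eq : ∀ χ : AddChar G Circle,
      ∑ x : G, (χ x : ℂ) = if χ = 1 then (Fintype.card G : ℂ) else 0)
    (riesz : ∀ (a : ℂ) (f g : AddChar G Circle → ℂ) (Λ : Finset (AddChar G Circle))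
      (χ : AddChar G Circle), RelDiss χ Λ →
      ∑ x : G, (χ x : ℂ) * ∏ lam ∈ Λ, (a + f lam * (lam x : ℂ) + g lam * ((lam x : ℂ))⁻¹)
        = if χ = 1 then (Fintype.card G : ℂ) * a ^ Λ.card else 0)
    (exp_mul_le_cosh_add : ∀ {u : ℝ} (t : ℝ), |u| ≤ 1 →
      Real.exp (t * u) ≤ Real.cosh t + u * Real.sinh t)
    (D : Finset G) (hD : D.Nonempty) {η : ℝ} (hη : 0 < η)
    (Λ : Finset (AddChar G Circle)) (hsub : (Λ : Set (AddChar G Circle)) ⊆ specSet η D)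
    (hdiss : RelDiss (1 : AddChar G Circle) Λ) :
    (Λ.card : ℝ) * η ^ 2 ≤ 2 * Real.log (1 / ((D.card : ℝ) / Fintype.card G)) := by
  classical
  set N : ℕ := Fintype.card G with hNdef
  set n : ℕ := D.card
  set m : ℕ := Λ.card with hmeq
  have hN : 0 < N := Fintype.card_pos
  have hn : 0 < n := Finset.card_pos.2 hD
  have hδpos : 0 < (n : ℝ) / N := by positivity
  set F : AddChar G Circle → ℂ := fourierInd D
  have hspec : ∀ lam ∈ Λ, η * ((n : ℝ) / N) ≤ ‖F lam‖ := fun lam hl => hsub hl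
  have hFne : ∀ lam ∈ Λ, F lam ≠ 0 := by
    intro lam hl hc
    have := hspec lam hl
    rw [hc] at this
    simp only [norm_zero] at this
    nlinarith
  set c : AddChar G Circle → ℂ := fun lam => (‖F lam‖ : ℂ) / F lam with hc
  have hcF : ∀ lam ∈ Λ, c lam * F lam = (‖F lam‖ : ℂ) := by
    intro lam hl; rw [hc]; exact div_mul_cancel₀ _ (hFne lam hl)
  have hcabs : ∀ lam ∈ Λ, ‖c lam‖ = 1 := by
    intro lam hl
    rw [hc]
    simp only [norm_div, Complex.norm_real, norm_norm]
    rw [div_self (by simpa using (hFne lam hl))]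
  set g : G → ℝ := fun x => ∑ lam ∈ Λ, (c lam * (lam x : ℂ)).re with hg
  have hre1 : ∀ lam ∈ Λ, ∀ x : G, |(c lam * (lam x : ℂ)).re| ≤ 1 := by
    intro lam hl x
    calc |(c lam * (lam x : ℂ)).re| ≤ ‖c lam * (lam x : ℂ)‖ :=
          Complex.abs_re_le_norm _
      _ = 1 := by rw [norm_mul, hcabs lam hl, Circle.norm_coe, mul_one]
  -- Step: lower bound on sum of g over D
  have hgD : (m : ℝ) * η * n ≤ ∑ x ∈ D, g x := by
    have swap : ∑ x ∈ D, g x = ∑ lam ∈ Λ, (c lam * ((N : ℂ) * F lam)).re := by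
      rw [hg, Finset.sum_comm]
      refine Finset.sum_congr rfl fun lam hl => ?_
      rw [← Complex.re_sum, ← Finset.mul_sum, sum_over_D]
    rw [swap]
    have : ∀ lam ∈ Λ, (m : ℝ)⁻¹ * ((m:ℝ) * η * n) ≤ (c lam * ((N : ℂ) * F lam)).re := by
      intro lam hl
      have : c lam * ((N : ℂ) * F lam) = (N : ℂ) * (‖F lam‖ : ℂ) := by
        rw [show c lam * ((N:ℂ) * F lam) = (N:ℂ) * (c lam * F lam) by ring, hcF lam hl]
      rw [this]
      have : ((N : ℂ) * (‖F lam‖ : ℂ)).re = (N : ℝ) * ‖F lam‖ := by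
        push_cast; simp
      rw [this]
      have h1 := hspec lam hl
      have hm : (0:ℝ) < m := by
        have : lam ∈ Λ := hl
        exact_mod_cast Nat.cast_pos.2 (Finset.card_pos.2 ⟨lam, this⟩)
      rw [inv_mul_eq_div]
      rw [div_le_iff₀ hm] at *
      have : (N:ℝ) * (η * ((n:ℝ)/N)) = η * n := by field_simp
      nlinarith [mul_le_mul_of_nonneg_left h1 (le_of_lt (Nat.cast_pos.2 hN : (0:ℝ) < N))]
    calc (m:ℝ) * η * n = ∑ _lam ∈ Λ, (m:ℝ)⁻¹ * ((m:ℝ)*η*n) := by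
          have hmcard : ((Λ.card : ℕ) : ℝ) = (m:ℝ) := rfl
          rw [Finset.sum_const, nsmul_eq_mul, hmcard]
          rcases Nat.eq_zero_or_pos m with hm | hm
          · simp [hm]
          · have hm' : (m:ℝ) ≠ 0 := Nat.cast_ne_zero.2 hm.ne'
            field_simp
      _ ≤ ∑ lam ∈ Λ, (c lam * ((N : ℂ) * F lam)).re := Finset.sum_le_sum this
  -- Step: Riesz product identity (real form)
  have hriesz : ∑ x : G, ∏ lam ∈ Λ, (Real.cosh η + (c lam * (lam x : ℂ)).re * Real.sinh η)
      = (N : ℝ) * Real.cosh η ^ m := by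
    have key := riesz (Real.cosh η) (fun lam => (Real.sinh η / 2 : ℂ) * c lam)
      (fun lam => (Real.sinh η / 2 : ℂ) * (starRingEnd ℂ) (c lam)) Λ 1 hdiss
    rw [if_pos rfl] at key
    simp only [AddChar.one_apply, Circle.coe_one, one_mul] at key
    have hfac : ∀ (x : G) (lam : AddChar G Circle),
        ((Real.cosh η + (c lam * (lam x : ℂ)).re * Real.sinh η : ℝ) : ℂ)
        = (Real.cosh η : ℂ) + (Real.sinh η / 2 : ℂ) * c lam * (lam x : ℂ)
          + (Real.sinh η / 2 : ℂ) * (starRingEnd ℂ) (c lam) * ((lam x : ℂ))⁻¹ := by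
      intro x lam
      have hconj : (starRingEnd ℂ) ((lam x : ℂ)) = ((lam x : ℂ))⁻¹ := by
        rw [← Circle.coe_inv_eq_conj, Circle.coe_inv]
      have hrez : ((c lam * (lam x : ℂ)).re : ℂ)
          = (c lam * (lam x : ℂ) + (starRingEnd ℂ) (c lam) * ((lam x : ℂ))⁻¹) / 2 := by
        rw [← hconj, ← map_mul]
        rw [eq_div_iff (two_ne_zero)]
        rw [Complex.add_conj]
        push_cast; ring
      push_cast
      rw [hrez]; ring
    have : ∀ x : G, ((∏ lam ∈ Λ, (Real.cosh η + (c lam * (lam x : ℂ)).re * Real.sinh η) : ℝ) : ℂ)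
        = ∏ lam ∈ Λ, ((Real.cosh η : ℂ) + (Real.sinh η / 2 : ℂ) * c lam * (lam x : ℂ)
          + (Real.sinh η / 2 : ℂ) * (starRingEnd ℂ) (c lam) * ((lam x : ℂ))⁻¹) := by
      intro x
      rw [Complex.ofReal_prod]
      exact Finset.prod_congr rfl fun lam _ => hfac x lam
    have hsum : ((∑ x : G, ∏ lam ∈ Λ, (Real.cosh η + (c lam * (lam x : ℂ)).re * Real.sinh η) : ℝ) : ℂ)
        = ((N : ℝ) * Real.cosh η ^ m : ℝ) := by
      rw [Complex.ofReal_sum, Finset.sum_congr rfl fun x _ => this x, key, hmeq]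
      push_cast
      ring
    exact_mod_cast hsum
  -- Step: pointwise exponential bound and chain
  have hpt : ∀ x : G, Real.exp (η * g x)
      ≤ ∏ lam ∈ Λ, (Real.cosh η + (c lam * (lam x : ℂ)).re * Real.sinh η) := by
    intro x
    rw [hg, Finset.mul_sum, Real.exp_sum]
    refine Finset.prod_le_prod (fun lam _ => (Real.exp_pos _).le) fun lam hl => ?_
    exact exp_mul_le_cosh_add η (hre1 lam hl x)
  have hupper : ∑ x ∈ D, Real.exp (η * g x) ≤ (N : ℝ) * Real.exp ((m : ℝ) * (η^2/2)) := by
    calc ∑ x ∈ D, Real.exp (η * g x) ≤ ∑ x : G, Real.exp (η * g x) :=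
          Finset.sum_le_sum_of_subset_of_nonneg (Finset.subset_univ D)
            (fun x _ _ => (Real.exp_pos _).le)
      _ ≤ ∑ x : G, ∏ lam ∈ Λ, (Real.cosh η + (c lam * (lam x : ℂ)).re * Real.sinh η) :=
          Finset.sum_le_sum fun x _ => hpt x
      _ = (N : ℝ) * Real.cosh η ^ m := hriesz
      _ ≤ (N : ℝ) * Real.exp ((m : ℝ) * (η^2/2)) := by
          have h1 : Real.cosh η ^ m ≤ Real.exp (η^2/2) ^ m :=
            pow_le_pow_left₀ (Real.cosh_pos η).le (Real.cosh_le_exp_half_sq η) m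
          rw [← Real.exp_nat_mul] at h1
          have : (m : ℝ) * (η^2/2) = m * (η^2/2) := rfl
          exact mul_le_mul_of_nonneg_left (by simpa using h1) (Nat.cast_nonneg N)
  have hlower : (n : ℝ) * Real.exp ((m : ℝ) * η^2) ≤ ∑ x ∈ D, Real.exp (η * g x) := by
    set c0 : ℝ := (m : ℝ) * η^2 with hc0
    have hpt2 : ∀ x ∈ D, Real.exp c0 * (1 + (η * g x - c0)) ≤ Real.exp (η * g x) := by
      intro x _
      have h := Real.add_one_le_exp (η * g x - c0)
      calc Real.exp c0 * (1 + (η * g x - c0)) ≤ Real.exp c0 * Real.exp (η * g x - c0) := by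
            refine mul_le_mul_of_nonneg_left ?_ (Real.exp_pos _).le
            linarith
        _ = Real.exp (η * g x) := by rw [← Real.exp_add]; ring_nf
    calc (n : ℝ) * Real.exp c0 ≤ ∑ x ∈ D, Real.exp c0 * (1 + (η * g x - c0)) := by
          have expand : ∀ x : G, Real.exp c0 * (1 + (η * g x - c0))
              = Real.exp c0 * (1 - c0) + (Real.exp c0 * η) * g x := fun x => by ring
          rw [Finset.sum_congr rfl fun x _ => expand x, Finset.sum_add_distrib,
            Finset.sum_const, ← Finset.mul_sum, nsmul_eq_mul]
          have hsg : (c0 : ℝ) * n ≤ η * ∑ x ∈ D, g x := by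
            have := mul_le_mul_of_nonneg_left hgD hη.le
            calc c0 * n = η * ((m:ℝ) * η * n) := by rw [hc0]; ring
              _ ≤ η * ∑ x ∈ D, g x := this
          have hncard : ((D.card : ℕ) : ℝ) = (n:ℝ) := rfl
          rw [hncard]
          nlinarith [Real.exp_pos c0, mul_le_mul_of_nonneg_left hsg (Real.exp_pos c0).le]
      _ ≤ ∑ x ∈ D, Real.exp (η * g x) := Finset.sum_le_sum hpt2
  -- Conclude
  have hmain : (n : ℝ) * Real.exp ((m : ℝ) * η^2) ≤ (N : ℝ) * Real.exp ((m : ℝ) * (η^2/2)) :=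
    le_trans hlower hupper
  have hNpos : (0:ℝ) < N := Nat.cast_pos.2 hN
  have hratio : (n : ℝ) / N ≤ Real.exp (-((m:ℝ) * η^2 / 2)) := by
    rw [div_le_iff₀ hNpos]
    have hexp : Real.exp (-((m:ℝ) * η^2/2)) * N * Real.exp ((m:ℝ) * η^2)
        = (N : ℝ) * Real.exp ((m : ℝ) * (η^2/2)) := by
      rw [mul_comm (Real.exp _) (N:ℝ), mul_assoc, ← Real.exp_add]
      ring_nf
    nlinarith [Real.exp_pos ((m:ℝ) * η^2), hmain, Real.exp_pos (-((m:ℝ) * η^2/2))]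
  have hlog : Real.log ((n:ℝ)/N) ≤ -((m:ℝ) * η^2 / 2) := by
    calc Real.log ((n:ℝ)/N) ≤ Real.log (Real.exp (-((m:ℝ) * η^2/2))) :=
          Real.log_le_log hδpos hratio
      _ = -((m:ℝ) * η^2/2) := Real.log_exp _
  rw [one_div, Real.log_inv]
  linarith

lemma relDiss_one_empty : RelDiss (1 : AddChar G Circle) (∅ : Finset (AddChar G Circle)) :=
  fun ε _ _ => ⟨rfl, fun lam hl => absurd hl (Finset.notMem_empty lam)⟩

lemma chang_bound' (D : Finset G) (hD : D.Nonempty) {η : ℝ} (hη : 0 < η)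
    (Λ : Finset (AddChar G Circle)) (hsub : (Λ : Set (AddChar G Circle)) ⊆ specSet η D)
    (hdiss : RelDiss (1 : AddChar G Circle) Λ) :
    (Λ.card : ℝ) ≤ 2 * η⁻¹ ^ 2 * Real.log (1 / ((D.card : ℝ) / Fintype.card G)) := by
  have h := chang_card_bound char_sum_eq
    (fun a f g Λ χ h => riesz_sum char_sum_eq a f g Λ χ h)
    (fun {u} t hu => exp_mul_le_cosh_add t hu) D hD hη Λ hsub hdiss
  have hη2 : (0:ℝ) < η ^ 2 := by positivity
  have key : (Λ.card : ℝ) = η⁻¹ ^ 2 * ((Λ.card : ℝ) * η ^ 2) := by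
    field_simp
  rw [key]
  have h2 := mul_le_mul_of_nonneg_left h (by positivity : (0:ℝ) ≤ η⁻¹ ^ 2)
  exact h2.trans_eq (by ring)
  
end ChangAux

/-- Chang's lemma.  Let `G` be a finite additive group and `D ⊆ G` of density
`δ > 0`.  For `η > 0` there is `Δ̃ ⊆ Δ_η(D)` with `|Δ̃| ≤ C η⁻² log(1/δ)`, `C` absolute, such
that every `γ ∈ Δ_η(D)` is a `{-1,0,1}`-combination of the elements of `Δ̃` (written
multiplicatively, the dual group being `AddChar G Circle`). -/
theorem statement_4 :
    ∃ C : ℝ, 0 < C ∧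
      ∀ (G : Type) [AddCommGroup G] [Fintype G] (D : Finset G) (η : ℝ),
        D.Nonempty → 0 < η →
        ∃ Δt : Finset (AddChar G Circle),
          (Δt : Set (AddChar G Circle)) ⊆ specSet η D ∧
          (Δt.card : ℝ) ≤ C * η⁻¹ ^ 2 * Real.log (1 / ((D.card : ℝ) / Fintype.card G)) ∧
          ∀ γ ∈ specSet η D, ∃ ε : AddChar G Circle → ℤ,
            (∀ lam, ε lam = -1 ∨ ε lam = 0 ∨ ε lam = 1) ∧
            γ = ∏ lam ∈ Δt, lam ^ ε lam := by
  classical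
  refine ⟨2, two_pos, ?_⟩
  intro G _ _ D η hD hη
  set S : Set ℕ := {k : ℕ | ∃ Λ : Finset (AddChar G Circle),
    (Λ : Set (AddChar G Circle)) ⊆ specSet η D ∧ RelDiss 1 Λ ∧ Λ.card = k} with hS
  have hS0 : 0 ∈ S := ⟨∅, by simp, relDiss_one_empty, rfl⟩
  set B : ℝ := 2 * η⁻¹ ^ 2 * Real.log (1 / ((D.card : ℝ) / Fintype.card G)) with hB
  have hbdd : ∀ k ∈ S, k ≤ ⌊B⌋₊ := by
    rintro k ⟨Λ, hsub, hdiss, rfl⟩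
    exact Nat.le_floor (chang_bound' D hD hη Λ hsub hdiss)
  have hSbdd : BddAbove S := ⟨⌊B⌋₊, hbdd⟩
  have hmem := Nat.sSup_mem ⟨0, hS0⟩ hSbdd
  obtain ⟨Λ, hsub, hdiss, hcard⟩ := hmem
  refine ⟨Λ, hsub, ?_, ?_⟩
  · exact chang_bound' D hD hη Λ hsub hdiss
  · intro γ hγ
    by_cases hmemγ : γ ∈ Λ
    · refine ⟨fun lam => if lam = γ then 1 else 0, ?_, ?_⟩
      · intro lam; by_cases h : lam = γ <;> simp [h]
      · rw [Finset.prod_eq_single_of_mem γ hmemγ (fun b _ hb => by simp [hb])]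
        simp
    · -- maximality: insert γ Λ is not relatively dissociated
      have hnot : ¬ RelDiss (1 : AddChar G Circle) (insert γ Λ) := by
        intro hrd
        have : (insert γ Λ).card ∈ S := ⟨insert γ Λ, by
          rw [Finset.coe_insert]
          exact Set.insert_subset hγ hsub, hrd, rfl⟩
        have hle := le_csSup hSbdd this
        rw [Finset.card_insert_of_notMem hmemγ, ← hcard] at hle
        omega
      rw [RelDiss] at hnot
      push_neg at hnot
      obtain ⟨ε, hgood, hprod, hbad⟩ := hnot
      rw [one_mul, Finset.prod_insert hmemγ] at hprod
      have hwit : ∃ lam ∈ insert γ Λ, ε lam ≠ 0 := hbad rfl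
      rcases hgood γ with he | he | he
      · -- ε γ = -1 : γ = ∏ lam ^ ε lam
        refine ⟨ε, hgood, ?_⟩
        have : γ ^ (-1 : ℤ) * ∏ lam ∈ Λ, lam ^ ε lam = 1 := by rw [← he]; exact hprod
        rw [zpow_neg_one] at this
        have := eq_inv_of_mul_eq_one_left ((mul_comm _ _).trans this)
        rw [inv_inv] at this
        exact this.symm
      · -- ε γ = 0 : contradiction with dissociativity of Λ
        exfalso
        rw [he, zpow_zero, one_mul] at hprod
        obtain ⟨-, hzero⟩ := hdiss ε hgood (by rw [one_mul]; exact hprod)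
        obtain ⟨lam, hlam, hne⟩ := hwit
        rcases Finset.mem_insert.1 hlam with rfl | hlam'
        · exact hne he
        · exact hne (hzero lam hlam')
      · -- ε γ = 1 : γ = ∏ lam ^ (-ε lam)
        refine ⟨fun lam => -(ε lam), ?_, ?_⟩
        · intro lam
          rcases hgood lam with h | h | h
          · right; right; simp [h]
          · right; left; simp [h]
          · left; simp [h]
        · have : γ ^ (1 : ℤ) * ∏ lam ∈ Λ, lam ^ ε lam = 1 := by rw [← he]; exact hprod
          rw [zpow_one] at this
          have hγeq := eq_inv_of_mul_eq_one_left this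
          rw [hγeq, ← Finset.prod_inv_distrib]
          exact Finset.prod_congr rfl fun lam _ => by rw [← zpow_neg]
end

section
/- Let B = B_ρ(Γ) be a regular Bohr set in ℤ/Nℤ of rank k, and let B' ⊆ B_{ερ}(Γ) be a nonempty set with ε ≤ c/k for a sufficiently small absolute constant c > 0. Then for any f : ℤ/Nℤ → ℂ with ‖f‖_∞ ≤ 1, ⟨f, B ∗ β'⟩ = (𝔼_{x∈B} f(x) + O(εk)) μ_G(B), where the implied constant is absolute. -/
open Finset

/-- The standard character `e(x) = exp(2πi x / N)` on `ℤ/Nℤ`. -/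
noncomputable def eZ (N : ℕ) (x : ZMod N) : ℂ :=
  Complex.exp (2 * Real.pi * Complex.I * (x.val : ℂ) / (N : ℂ))

/-- The Bohr set `B_ρ(Γ) = {x ∈ ℤ/Nℤ : |e(γx) - 1| < ρ for all γ ∈ Γ}`, of rank `Γ.card` and
width `ρ`. -/
noncomputable def bohrZ (N : ℕ) [NeZero N] (Γ : Finset (ZMod N)) (ρ : ℝ) : Finset (ZMod N) :=
  letI := Classical.decPred fun x : ZMod N => ∀ γ ∈ Γ, Norm.norm (eZ N (γ * x) - 1) < ρ
  Finset.univ.filter fun x => ∀ γ ∈ Γ, Norm.norm (eZ N (γ * x) - 1) < ρ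

/-- A Bohr set `B_ρ(Γ)` of rank `k = Γ.card` is regular if
`|B|/(1 + 100k|η|) ≤ |B_{(1+η)ρ}(Γ)| ≤ (1 + 100k|η|)|B|` whenever `|η| ≤ 1/(100k)`. -/
def IsRegularBohr (N : ℕ) [NeZero N] (Γ : Finset (ZMod N)) (ρ : ℝ) : Prop :=
  ∀ η : ℝ, |η| ≤ 1 / (100 * Γ.card) →
    ((bohrZ N Γ ρ).card : ℝ) / (1 + 100 * Γ.card * |η|) ≤
        ((bohrZ N Γ ((1 + η) * ρ)).card : ℝ) ∧
      ((bohrZ N Γ ((1 + η) * ρ)).card : ℝ) ≤ (1 + 100 * Γ.card * |η|) * (bohrZ N Γ ρ).card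

lemma mem_bohrZ {N : ℕ} [NeZero N] {Γ : Finset (ZMod N)} {ρ : ℝ} {x : ZMod N} :
    x ∈ bohrZ N Γ ρ ↔ ∀ γ ∈ Γ, Norm.norm (eZ N (γ * x) - 1) < ρ := by
  simp [bohrZ]

lemma eZ_add (N : ℕ) [NeZero N] (a b : ZMod N) : eZ N (a + b) = eZ N a * eZ N b := by
  unfold eZ
  rw [← Complex.exp_add]
  have hN : (N : ℂ) ≠ 0 := Nat.cast_ne_zero.2 (NeZero.ne N)
  have hval : ((a + b).val + N * ((a.val + b.val) / N) : ℕ) = a.val + b.val := by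
    rw [ZMod.val_add]; exact Nat.mod_add_div _ _
  have hc : ((a.val : ℂ) + (b.val : ℂ)) =
      (((a + b).val : ℂ) + (N : ℂ) * (((a.val + b.val) / N : ℕ) : ℂ)) := by
    exact_mod_cast congrArg (fun n : ℕ => (n : ℂ)) hval.symm
  set q : ℕ := (a.val + b.val) / N with hq
  have h1 : ((a.val : ℂ) + (b.val : ℂ)) / (N : ℂ) = (((a + b).val : ℂ)) / (N : ℂ) + (q : ℂ) := by
    rw [hc, add_div, mul_comm (N : ℂ) (q : ℂ), mul_div_assoc, div_self hN, mul_one]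
  have hexp : 2 * (Real.pi : ℂ) * Complex.I * (a.val : ℂ) / (N : ℂ)
        + 2 * (Real.pi : ℂ) * Complex.I * (b.val : ℂ) / (N : ℂ)
      = 2 * (Real.pi : ℂ) * Complex.I * ((a + b).val : ℂ) / (N : ℂ)
        + (q : ℂ) * (2 * (Real.pi : ℂ) * Complex.I) := by
    linear_combination (2 * (Real.pi : ℂ) * Complex.I) * h1
  rw [hexp, Complex.exp_add, Complex.exp_nat_mul_two_pi_mul_I, mul_one]

lemma abs_eZ (N : ℕ) (a : ZMod N) : Norm.norm (eZ N a) = 1 := by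
  have h : (2 * (Real.pi : ℂ) * Complex.I * ((a.val : ℕ) : ℂ) / (N : ℂ))
      = ((2 * Real.pi * (a.val : ℝ) / (N : ℝ) : ℝ) : ℂ) * Complex.I := by
    push_cast; ring
  rw [eZ, h, Complex.norm_exp_ofReal_mul_I]

lemma eZ_zero (N : ℕ) [NeZero N] : eZ N 0 = 1 := by
  simp [eZ, ZMod.val_zero]

lemma bohrZ_mono {N : ℕ} [NeZero N] {Γ : Finset (ZMod N)} {ρ ρ' : ℝ} (h : ρ ≤ ρ') :
    bohrZ N Γ ρ ⊆ bohrZ N Γ ρ' := fun x hx =>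
  mem_bohrZ.2 fun γ hγ => lt_of_lt_of_le (mem_bohrZ.1 hx γ hγ) h

lemma bohrZ_add {N : ℕ} [NeZero N] {Γ : Finset (ZMod N)} {ρ ρ' : ℝ} {x y : ZMod N}
    (hx : x ∈ bohrZ N Γ ρ) (hy : y ∈ bohrZ N Γ ρ') : x + y ∈ bohrZ N Γ (ρ + ρ') := by
  rw [mem_bohrZ] at *
  intro γ hγ
  have h1 := hx γ hγ
  have h2 := hy γ hγ
  have hkey : eZ N (γ * (x + y)) - 1
      = eZ N (γ * x) * (eZ N (γ * y) - 1) + (eZ N (γ * x) - 1) := by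
    rw [mul_add, eZ_add]; ring
  calc Norm.norm (eZ N (γ * (x + y)) - 1)
      ≤ Norm.norm (eZ N (γ * x) * (eZ N (γ * y) - 1)) + Norm.norm (eZ N (γ * x) - 1) := by
        rw [hkey]; exact norm_add_le _ _
    _ = Norm.norm (eZ N (γ * y) - 1) + Norm.norm (eZ N (γ * x) - 1) := by
        rw [norm_mul, abs_eZ, one_mul]
    _ < ρ + ρ' := by linarith

/-- Lemma 6.2 of the paper.  Let `B = B_ρ(Γ)` be a regular Bohr set in
`ℤ/Nℤ` of rank `k`, and `B' ⊆ B_{ερ}(Γ)` nonempty with `ε ≤ c/k` for a sufficiently small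
absolute constant `c > 0`.  Then for any `f : ℤ/Nℤ → ℂ` with `‖f‖_∞ ≤ 1`,
`⟨f, B ∗ β'⟩ = (𝔼_{x ∈ B} f(x) + O(εk)) μ_G(B)`, with an absolute implied constant.  Here
`β' = μ_{B'}`, `B ∗ β'(x) = 𝔼_{y ∈ B'} 1_B(x - y)`, `μ_G(B) = |B|/N` and
`⟨f, g⟩ = 𝔼_{x ∈ G} f(x) conj(g(x))` (the second argument being real-valued here). -/
theorem statement_13 :
    ∃ c C : ℝ, 0 < c ∧ 0 < C ∧
      ∀ (N : ℕ) [NeZero N] (Γ : Finset (ZMod N)) (ρ ε : ℝ) (B' : Finset (ZMod N)),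
        IsRegularBohr N Γ ρ → B' ⊆ bohrZ N Γ (ε * ρ) → B'.Nonempty →
        0 < ε → ε ≤ c / Γ.card →
        ∀ f : ZMod N → ℂ, (∀ x, Norm.norm (f x) ≤ 1) →
          Norm.norm
              ((∑ x : ZMod N,
                  f x * (((∑ y ∈ B', ind (bohrZ N Γ ρ) (x - y)) / (B'.card : ℝ) : ℝ) : ℂ)) /
                  (N : ℂ) -
                ((∑ x ∈ bohrZ N Γ ρ, f x) / ((bohrZ N Γ ρ).card : ℂ)) *
                  (((bohrZ N Γ ρ).card : ℝ) / (N : ℝ) : ℝ)) ≤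
            C * ε * Γ.card * (((bohrZ N Γ ρ).card : ℝ) / N) := by
  classical
  refine ⟨1/100, 200, by norm_num, by norm_num, ?_⟩
  intro N _ Γ ρ ε B' hreg hB' hB'ne hε hεk f hf
  set B := bohrZ N Γ ρ with hB
  -- basic positivity facts
  have hk0 : Γ.card ≠ 0 := by
    intro h
    rw [h] at hεk
    norm_num at hεk
    linarith
  have hk1 : (1 : ℝ) ≤ Γ.card := by exact_mod_cast Nat.one_le_iff_ne_zero.2 hk0
  have hρ : 0 < ρ := by
    obtain ⟨y0, hy0⟩ := hB'ne
    obtain ⟨γ0, hγ0⟩ := Finset.card_ne_zero.1 hk0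
    have h := mem_bohrZ.1 (hB' hy0) γ0 hγ0
    have h2 : 0 < ε * ρ := lt_of_le_of_lt (norm_nonneg _) h
    nlinarith
  have hNpos : (0 : ℝ) < N := by
    have := Nat.pos_of_ne_zero (NeZero.ne N)
    exact_mod_cast this
  have hNc : (N : ℂ) ≠ 0 := Nat.cast_ne_zero.2 (NeZero.ne N)
  have hB0 : (0 : ZMod N) ∈ B := by
    rw [hB, mem_bohrZ]
    intro γ hγ
    simp [mul_zero, eZ_zero, hρ]
  have hBpos : (0 : ℝ) < B.card := by
    have : 0 < B.card := Finset.card_pos.2 ⟨0, hB0⟩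
    exact_mod_cast this
  have hBcC : ((B.card : ℂ)) ≠ 0 := by exact_mod_cast ne_of_gt hBpos
  have hB'pos : (0 : ℝ) < B'.card := by
    have : 0 < B'.card := Finset.card_pos.2 hB'ne
    exact_mod_cast this
  have hB'cC : ((B'.card : ℂ)) ≠ 0 := by exact_mod_cast ne_of_gt hB'pos
  -- regularity at η = ε
  set B₁ := bohrZ N Γ ((1 + ε) * ρ) with hB₁
  have hηbound : |ε| ≤ 1 / (100 * Γ.card) := by
    rw [abs_of_pos hε]
    rw [div_div] at hεk
    exact hεk
  have hregε := (hreg ε hηbound).2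
  rw [abs_of_pos hε] at hregε
  have hcard1 : (B₁.card : ℝ) ≤ (1 + 100 * Γ.card * ε) * B.card := hregε
  have hBB₁ : B ⊆ B₁ := bohrZ_mono (by nlinarith)
  -- key pointwise estimate
  have key : ∀ y ∈ B', Norm.norm ((∑ z ∈ B, f (z + y)) - ∑ z ∈ B, f z)
      ≤ 200 * ε * Γ.card * B.card := by
    intro y hy
    set By := B.image (· + y) with hBy
    have hinj : Function.Injective (· + y) := fun a b h => by simpa using h
    have hTy : ∑ w ∈ By, f w = ∑ z ∈ B, f (z + y) :=
      Finset.sum_image fun a _ b _ h => hinj h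
    have hBycard : (By.card : ℝ) = B.card := by
      rw [hBy, Finset.card_image_of_injective _ hinj]
    have hByB₁ : By ⊆ B₁ := by
      intro w hw
      obtain ⟨z, hz, rfl⟩ := Finset.mem_image.1 hw
      have h := bohrZ_add hz (hB' hy)
      have hre : ρ + ε * ρ = (1 + ε) * ρ := by ring
      rwa [hre] at h
    have hsd1 : ((By \ B).card : ℝ) ≤ 100 * Γ.card * ε * B.card := by
      have hsub : By \ B ⊆ B₁ \ B := Finset.sdiff_subset_sdiff hByB₁ le_rfl
      have h1 : ((By \ B).card : ℝ) ≤ ((B₁ \ B).card : ℝ) := by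
        exact_mod_cast Finset.card_le_card hsub
      have h2 : ((B₁ \ B).card : ℝ) = (B₁.card : ℝ) - B.card := by
        rw [Finset.card_sdiff_of_subset hBB₁]
        exact_mod_cast Nat.cast_sub (Finset.card_le_card hBB₁)
      nlinarith
    have hsd2 : ((B \ By).card : ℝ) ≤ 100 * Γ.card * ε * B.card := by
      have hsub : B \ By ⊆ B₁ \ By := Finset.sdiff_subset_sdiff hBB₁ le_rfl
      have h1 : ((B \ By).card : ℝ) ≤ ((B₁ \ By).card : ℝ) := by
        exact_mod_cast Finset.card_le_card hsub
      have h2 : ((B₁ \ By).card : ℝ) = (B₁.card : ℝ) - By.card := by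
        rw [Finset.card_sdiff_of_subset hByB₁]
        exact_mod_cast Nat.cast_sub (Finset.card_le_card hByB₁)
      nlinarith
    have habs : ∀ s : Finset (ZMod N), Norm.norm (∑ x ∈ s, f x) ≤ s.card := by
      intro s
      calc Norm.norm (∑ x ∈ s, f x) ≤ ∑ x ∈ s, Norm.norm (f x) :=
            norm_sum_le _ _
        _ ≤ ∑ _x ∈ s, (1 : ℝ) := Finset.sum_le_sum fun x _ => hf x
        _ = s.card := by simp
    rw [← hTy, ← Finset.sum_sdiff_sub_sum_sdiff]
    calc Norm.norm ((∑ x ∈ By \ B, f x) - ∑ x ∈ B \ By, f x)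
        ≤ Norm.norm (∑ x ∈ By \ B, f x) + Norm.norm (∑ x ∈ B \ By, f x) := by
          exact norm_sub_le _ _
      _ ≤ ((By \ B).card : ℝ) + ((B \ By).card : ℝ) := add_le_add (habs _) (habs _)
      _ ≤ 200 * ε * Γ.card * B.card := by nlinarith
  -- rearrange the main expression
  have hinner : ∀ y : ZMod N,
      (∑ x : ZMod N, f x * (if x - y ∈ B then (1 : ℂ) else 0)) = ∑ z ∈ B, f (z + y) := by
    intro y
    have hinj : Function.Injective (· + y) := fun a b h => by simpa using h
    have hset : Finset.univ.filter (fun x : ZMod N => x - y ∈ B) = B.image (· + y) := by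
      ext w
      simp only [Finset.mem_filter, Finset.mem_univ, true_and, Finset.mem_image]
      constructor
      · intro h
        exact ⟨w - y, h, by ring⟩
      · rintro ⟨z, hz, rfl⟩
        simpa using hz
    simp only [mul_ite, mul_one, mul_zero]
    rw [← Finset.sum_filter, hset, Finset.sum_image fun a _ b _ h => hinj h]
  have hcoe : ∀ x : ZMod N,
      (((∑ y ∈ B', ind B (x - y)) / (B'.card : ℝ) : ℝ) : ℂ)
        = (∑ y ∈ B', if x - y ∈ B then (1 : ℂ) else 0) / (B'.card : ℂ) := by
    intro x
    push_cast [ind, apply_ite (fun r : ℝ => (r : ℂ))]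
    norm_num
  have h1 : (∑ x : ZMod N,
      f x * (((∑ y ∈ B', ind B (x - y)) / (B'.card : ℝ) : ℝ) : ℂ))
      = (∑ y ∈ B', ∑ z ∈ B, f (z + y)) / (B'.card : ℂ) := by
    simp_rw [hcoe, ← mul_div_assoc, Finset.mul_sum]
    rw [← Finset.sum_div, Finset.sum_comm]
    simp_rw [hinner]
  have hfinal :
      (∑ x : ZMod N,
          f x * (((∑ y ∈ B', ind B (x - y)) / (B'.card : ℝ) : ℝ) : ℂ)) / (N : ℂ) -
        ((∑ x ∈ B, f x) / ((B.card : ℂ))) * (((B.card : ℝ) / (N : ℝ) : ℝ) : ℂ)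
      = (∑ y ∈ B', ((∑ z ∈ B, f (z + y)) - ∑ z ∈ B, f z)) / ((B'.card : ℂ) * N) := by
    rw [h1, Finset.sum_sub_distrib, Finset.sum_const, nsmul_eq_mul]
    push_cast
    field_simp
  rw [hfinal, norm_div]
  have hden : Norm.norm ((B'.card : ℂ) * N) = (B'.card : ℝ) * N := by
    rw [norm_mul, Complex.norm_natCast, Complex.norm_natCast]
  have hnum : Norm.norm (∑ y ∈ B', ((∑ z ∈ B, f (z + y)) - ∑ z ∈ B, f z))
      ≤ (B'.card : ℝ) * (200 * ε * Γ.card * B.card) := by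
    calc Norm.norm (∑ y ∈ B', ((∑ z ∈ B, f (z + y)) - ∑ z ∈ B, f z))
        ≤ ∑ y ∈ B', Norm.norm ((∑ z ∈ B, f (z + y)) - ∑ z ∈ B, f z) :=
          norm_sum_le _ _
      _ ≤ ∑ _y ∈ B', 200 * ε * Γ.card * B.card := Finset.sum_le_sum key
      _ = (B'.card : ℝ) * (200 * ε * Γ.card * B.card) := by
          rw [Finset.sum_const, nsmul_eq_mul]
  rw [hden]
  calc Norm.norm (∑ y ∈ B', ((∑ z ∈ B, f (z + y)) - ∑ z ∈ B, f z)) / ((B'.card : ℝ) * N)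
      ≤ ((B'.card : ℝ) * (200 * ε * Γ.card * B.card)) / ((B'.card : ℝ) * N) := by
        gcongr
    _ = 200 * ε * Γ.card * ((B.card : ℝ) / N) := by
        field_simp
end
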